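/- For the Grushin inversion, for each j one has Σ_{k=1}^N ∂²y_j/∂x̃_k² + |x̃|^{2γ} Σ_{h=1}^l ∂²y_j/∂ỹ_h² = (2(2 - N - l - lγ)/(1+γ)) ỹ_j |x̃|^{2γ} d(z̃,0)^{-4-4γ}. -/

import Mathlib

open MeasureTheory Real

noncomputable section

variable {N l : ℕ}

/-- squared Euclidean norm -/
def nsq {n : ℕ} (x : Fin n → ℝ) : ℝ := ∑ i, x i ^ 2

/-- partial derivative in the `i`-th `x` direction -/
def pdx (u : (Fin N → ℝ) × (Fin l → ℝ) → ℝ) (i : Fin N)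
    (z : (Fin N → ℝ) × (Fin l → ℝ)) : ℝ :=
  deriv (fun t => u (Function.update z.1 i t, z.2)) (z.1 i)

/-- partial derivative in the `j`-th `y` direction -/
def pdy (u : (Fin N → ℝ) × (Fin l → ℝ) → ℝ) (j : Fin l)
    (z : (Fin N → ℝ) × (Fin l → ℝ)) : ℝ :=
  deriv (fun t => u (z.1, Function.update z.2 j t)) (z.2 j)

/-- Grushin operator `Δ_γ u = Δ_x u + |x|^{2γ} Δ_y u` -/
def grushinLap (γ : ℝ) (u : (Fin N → ℝ) × (Fin l → ℝ) → ℝ)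
    (z : (Fin N → ℝ) × (Fin l → ℝ)) : ℝ :=
  (∑ i, pdx (pdx u i) i z) + (nsq z.1) ^ γ * ∑ j, pdy (pdy u j) j z

/-- the Grushin distance to the origin:
`d(z,0) = ((1/(1+γ)²)|x|^{2+2γ} + |y|²)^{1/(2+2γ)}` (note `|x|^{2+2γ} = (nsq x)^{1+γ}`). -/
def gd (γ : ℝ) (z : (Fin N → ℝ) × (Fin l → ℝ)) : ℝ :=
  ((1 / (1 + γ) ^ 2) * (nsq z.1) ^ (1 + γ) + nsq z.2) ^ (1 / (2 + 2 * γ))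

/-- the Grushin inversion `x̃ = x/d², ỹ = y/d^{2+2γ}` -/
def ginv (γ : ℝ) (z : (Fin N → ℝ) × (Fin l → ℝ)) : (Fin N → ℝ) × (Fin l → ℝ) :=
  (fun i => z.1 i / gd γ z ^ 2, fun j => z.2 j / gd γ z ^ (2 + 2 * γ))

/-- divergence of a vector field on `ℝ^N × ℝ^l` -/
def gdiv (X : (Fin N → ℝ) × (Fin l → ℝ) → (Fin N → ℝ) × (Fin l → ℝ))
    (z : (Fin N → ℝ) × (Fin l → ℝ)) : ℝ :=
  (∑ i, pdx (fun w => (X w).1 i) i z) + ∑ j, pdy (fun w => (X w).2 j) j z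

/-- Euclidean dot product on `ℝ^N × ℝ^l` -/
def gdot (v w : (Fin N → ℝ) × (Fin l → ℝ)) : ℝ :=
  (∑ i, v.1 i * w.1 i) + ∑ j, v.2 j * w.2 j

lemma nsq_update {n : ℕ} (x : Fin n → ℝ) (k : Fin n) (t : ℝ) :
    nsq (Function.update x k t) = nsq x - x k ^ 2 + t ^ 2 := by
  unfold nsq
  rw [show ∑ i, Function.update x k t i ^ 2
      = ∑ i, Function.update (fun i => x i ^ 2) k (t ^ 2) i from
    Finset.sum_congr rfl fun i _ => by
      rcases eq_or_ne i k with h | h <;> simp [h, Function.update_apply]]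
  rw [Finset.sum_update_of_mem (Finset.mem_univ k), Finset.sdiff_singleton_eq_erase,
    Finset.sum_erase_eq_sub (Finset.mem_univ k)]
  ring

lemma nsq_nonneg {n : ℕ} (x : Fin n → ℝ) : 0 ≤ nsq x :=
  Finset.sum_nonneg fun _ _ => sq_nonneg _

lemma sq_le_nsq {n : ℕ} (x : Fin n → ℝ) (k : Fin n) : x k ^ 2 ≤ nsq x :=
  Finset.single_le_sum (f := fun i => x i ^ 2) (fun _ _ => sq_nonneg _) (Finset.mem_univ k)

lemma ysecond (e a D : ℝ) (hD : 0 < D) (t₀ : ℝ) :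
    deriv (deriv (fun t => (e * t + a) / (D + t ^ 2))) t₀
      = (-2 * (3 * e * t₀ + a) * (D + t₀ ^ 2) + 8 * t₀ ^ 2 * (e * t₀ + a)) /
          (D + t₀ ^ 2) ^ 3 := by
  have hpos : ∀ t : ℝ, 0 < D + t ^ 2 := fun t => by positivity
  have hden : ∀ t : ℝ, HasDerivAt (fun t : ℝ => D + t ^ 2) (2 * t) t := fun t => by
    simpa using (hasDerivAt_pow 2 t).const_add D
  have hnum : ∀ t : ℝ, HasDerivAt (fun t : ℝ => e * t + a) e t := fun t => by
    simpa using ((hasDerivAt_id t).const_mul e).add_const a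
  have h1 : deriv (fun t => (e * t + a) / (D + t ^ 2))
      = fun t => (e * (D + t ^ 2) - (e * t + a) * (2 * t)) / (D + t ^ 2) ^ 2 :=
    funext fun t => ((hnum t).div (hden t) (hpos t).ne').deriv
  rw [h1]
  have hnum2 : HasDerivAt (fun t : ℝ => e * (D + t ^ 2) - (e * t + a) * (2 * t))
      (e * (2 * t₀) - ((e * (2 * t₀)) + (e * t₀ + a) * 2)) t₀ := by
    have h2 : HasDerivAt (fun t : ℝ => (e * t + a) * (2 * t))
        (e * (2 * t₀) + (e * t₀ + a) * 2) t₀ := by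
      simpa [mul_comm] using (hnum t₀).fun_mul ((hasDerivAt_id t₀).const_mul 2)
    exact ((hden t₀).const_mul e).sub h2
  have hden2 : HasDerivAt (fun t : ℝ => (D + t ^ 2) ^ 2)
      ((2 : ℕ) * (D + t₀ ^ 2) ^ 1 * (2 * t₀)) t₀ := (hden t₀).pow 2
  rw [(hnum2.fun_div hden2 (by positivity)).deriv]
  have h0 := (hpos t₀).ne'
  field_simp
  ring

set_option maxHeartbeats 1000000 in
lemma xsecond (γ A B yj : ℝ) (hγ : 0 ≤ γ) (hB : 0 ≤ B) (t₀ : ℝ)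
    (ht : 0 < A + t₀ ^ 2) :
    deriv (deriv (fun t => yj / ((1 / (1 + γ) ^ 2) * (A + t ^ 2) ^ (1 + γ) + B))) t₀
      = (-yj * (2 / (1 + γ))) *
          (((A + t₀ ^ 2) ^ γ + 2 * γ * t₀ ^ 2 * (A + t₀ ^ 2) ^ (γ - 1)) *
              ((1 / (1 + γ) ^ 2) * (A + t₀ ^ 2) ^ (1 + γ) + B)
            - (4 / (1 + γ)) * t₀ ^ 2 * ((A + t₀ ^ 2) ^ γ) ^ 2) /
          ((1 / (1 + γ) ^ 2) * (A + t₀ ^ 2) ^ (1 + γ) + B) ^ 3 := by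
  have h1 : (0 : ℝ) < 1 + γ := by linarith
  set c : ℝ := 1 / (1 + γ) ^ 2 with hc
  have hcpos : 0 < c := by positivity
  set P : ℝ → ℝ := fun t => c * (A + t ^ 2) ^ (1 + γ) + B with hP
  have hPpos : ∀ t, 0 < A + t ^ 2 → 0 < P t := fun t htp => by
    have := Real.rpow_pos_of_pos htp (1 + γ)
    have : 0 < c * (A + t ^ 2) ^ (1 + γ) := by positivity
    simp only [hP]; linarith
  set φ : ℝ → ℝ := fun t => -yj * ((2 / (1 + γ)) * t * (A + t ^ 2) ^ γ / (P t) ^ 2) with hφ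
  have hq : ∀ t : ℝ, HasDerivAt (fun t : ℝ => A + t ^ 2) (2 * t) t := fun t => by
    simpa using (hasDerivAt_pow 2 t).const_add A
  have hPd : ∀ t, 0 < A + t ^ 2 →
      HasDerivAt P (c * (2 * t * (1 + γ) * (A + t ^ 2) ^ γ)) t := fun t htp => by
    have h := ((hq t).rpow_const (p := 1 + γ) (Or.inl htp.ne')).const_mul c |>.add_const B
    rw [show (1 : ℝ) + γ - 1 = γ from by ring] at h
    exact h
  have step1 : ∀ t, 0 < A + t ^ 2 → HasDerivAt (fun t => yj / P t) (φ t) t := by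
    intro t htp
    have hd : HasDerivAt (fun t => yj / P t)
        ((0 * P t - yj * (c * (2 * t * (1 + γ) * (A + t ^ 2) ^ γ))) / P t ^ 2) t :=
      (hasDerivAt_const t yj).fun_div (hPd t htp) (hPpos t htp).ne'
    convert hd using 1
    have h0 := (hPpos t htp).ne'
    have h1' : (1 : ℝ) + γ ≠ 0 := h1.ne'
    simp only [hφ, hc]
    rw [← mul_div_assoc]
    congr 1
    field_simp
    ring
  have hopen : IsOpen {t : ℝ | 0 < A + t ^ 2} :=
    isOpen_lt continuous_const (by continuity)
  have step2 : deriv (fun t => yj / P t) =ᶠ[nhds t₀] φ := by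
    filter_upwards [hopen.mem_nhds ht] with t htp using (step1 t htp).deriv
  have hnum : HasDerivAt (fun t => (2 / (1 + γ)) * t * (A + t ^ 2) ^ γ)
      ((2 / (1 + γ)) * ((A + t₀ ^ 2) ^ γ + t₀ * (2 * t₀ * γ * (A + t₀ ^ 2) ^ (γ - 1)))) t₀ := by
    have h2 : HasDerivAt (fun t : ℝ => t * (A + t ^ 2) ^ γ)
        (1 * (A + t₀ ^ 2) ^ γ + t₀ * (2 * t₀ * γ * (A + t₀ ^ 2) ^ (γ - 1))) t₀ :=
      (hasDerivAt_id t₀).fun_mul ((hq t₀).rpow_const (Or.inl ht.ne'))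
    have : HasDerivAt (fun t : ℝ => 2 / (1 + γ) * (t * (A + t ^ 2) ^ γ))
        (2 / (1 + γ) * (1 * (A + t₀ ^ 2) ^ γ + t₀ * (2 * t₀ * γ * (A + t₀ ^ 2) ^ (γ - 1)))) t₀ :=
      h2.const_mul (2 / (1 + γ))
    convert this using 2 <;> ring
  have hden : HasDerivAt (fun t => (P t) ^ 2)
      ((2 : ℕ) * (P t₀) ^ 1 * (c * (2 * t₀ * (1 + γ) * (A + t₀ ^ 2) ^ γ))) t₀ :=
    (hPd t₀ ht).pow 2
  have step3 := ((hnum.fun_div hden (by have := hPpos t₀ ht; positivity)).const_mul (-yj))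
  rw [Filter.EventuallyEq.deriv_eq step2, step3.deriv]
  have h0 := (hPpos t₀ ht).ne'
  have h1'' : (1 : ℝ) + γ ≠ 0 := h1.ne'
  simp only [hP, hc] at h0 ⊢
  field_simp
  ring

set_option maxHeartbeats 1000000 in
/-- Grushin Laplacian of the `y`-coordinates of the Grushin inversion. -/
theorem ginv_grushinLap_y (γ : ℝ) (hγ : 0 ≤ γ)
    (z : (Fin N → ℝ) × (Fin l → ℝ)) (hx : z.1 ≠ 0) (j : Fin l) :
    grushinLap γ (fun w => (ginv γ w).2 j) z
      = (2 * (2 - (N : ℝ) - l - l * γ) / (1 + γ)) * z.2 j * (nsq z.1) ^ γ *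
          gd γ z ^ (-4 - 4 * γ) := by
  classical
  have h1 : (0 : ℝ) < 1 + γ := by linarith
  have hs : 0 < nsq z.1 := by
    obtain ⟨i, hi⟩ := Function.ne_iff.mp hx
    exact Finset.sum_pos' (fun i _ => sq_nonneg _) ⟨i, Finset.mem_univ i, (sq_nonneg _).lt_of_ne' (pow_ne_zero 2 hi)⟩
  have hB0 : 0 ≤ nsq z.2 := nsq_nonneg _
  -- rewrite the function in simple form
  have hu : (fun w : (Fin N → ℝ) × (Fin l → ℝ) => (ginv γ w).2 j)
      = fun w => w.2 j / (1 / (1 + γ) ^ 2 * nsq w.1 ^ (1 + γ) + nsq w.2) := by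
    funext w
    have h0 : (0 : ℝ) ≤ 1 / (1 + γ) ^ 2 * nsq w.1 ^ (1 + γ) + nsq w.2 := by
      have := Real.rpow_nonneg (nsq_nonneg w.1) (1 + γ)
      have := nsq_nonneg w.2
      positivity
    have h2 : 1 / (2 + 2 * γ) * (2 + 2 * γ) = 1 := by
      field_simp
    simp only [ginv, gd]
    rw [← Real.rpow_mul h0, h2, Real.rpow_one]
  rw [hu]
  set s := nsq z.1 with hsdef
  set B := nsq z.2 with hBdef
  set Q : ℝ := 1 / (1 + γ) ^ 2 * s ^ (1 + γ) + B with hQdef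
  have hsp : 0 < s ^ (1 + γ) := Real.rpow_pos_of_pos hs _
  have hQ : 0 < Q := by rw [hQdef]; positivity
  simp only [grushinLap]
  -- the x-second derivatives
  have hxterm : ∀ k : Fin N,
      pdx (pdx (fun w => w.2 j / (1 / (1 + γ) ^ 2 * nsq w.1 ^ (1 + γ) + nsq w.2)) k) k z
        = (-z.2 j * (2 / (1 + γ))) *
            ((s ^ γ + 2 * γ * z.1 k ^ 2 * s ^ (γ - 1)) * Q
              - 4 / (1 + γ) * z.1 k ^ 2 * (s ^ γ) ^ 2) / Q ^ 3 := by
    intro k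
    have e1 : pdx (pdx (fun w => w.2 j / (1 / (1 + γ) ^ 2 * nsq w.1 ^ (1 + γ) + nsq w.2)) k) k z
        = deriv (deriv (fun t => z.2 j /
            (1 / (1 + γ) ^ 2 * (s - z.1 k ^ 2 + t ^ 2) ^ (1 + γ) + B))) (z.1 k) := by
      simp only [pdx]
      congr 1
      funext t
      simp only [Function.update_idem, Function.update_self]
      congr 1
      funext r
      rw [nsq_update, ← hsdef, ← hBdef]
    have ht : 0 < s - z.1 k ^ 2 + z.1 k ^ 2 := by
      have : s - z.1 k ^ 2 + z.1 k ^ 2 = s := by ring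
      rw [this]; exact hs
    rw [e1, xsecond γ (s - z.1 k ^ 2) B (z.2 j) hγ hB0 (z.1 k) ht]
    rw [show s - z.1 k ^ 2 + z.1 k ^ 2 = s from by ring, ← hQdef]
  -- sum of the x-second derivatives
  have hXsum : (∑ k, pdx (pdx (fun w => w.2 j /
        (1 / (1 + γ) ^ 2 * nsq w.1 ^ (1 + γ) + nsq w.2)) k) k z)
      = (N : ℝ) * ((-z.2 j * (2 / (1 + γ))) * (s ^ γ * Q) / Q ^ 3)
        + ((-z.2 j * (2 / (1 + γ))) *
            (2 * γ * s ^ (γ - 1) * Q - 4 / (1 + γ) * (s ^ γ) ^ 2) / Q ^ 3) * s := by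
    calc (∑ k, pdx (pdx (fun w => w.2 j /
            (1 / (1 + γ) ^ 2 * nsq w.1 ^ (1 + γ) + nsq w.2)) k) k z)
        = ∑ k, ((-z.2 j * (2 / (1 + γ))) * (s ^ γ * Q) / Q ^ 3
            + ((-z.2 j * (2 / (1 + γ))) *
              (2 * γ * s ^ (γ - 1) * Q - 4 / (1 + γ) * (s ^ γ) ^ 2) / Q ^ 3) * z.1 k ^ 2) :=
          Finset.sum_congr rfl fun k _ => by rw [hxterm k]; ring
      _ = _ := by
          rw [Finset.sum_add_distrib, Finset.sum_const, ← Finset.mul_sum,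
            Finset.card_univ, Fintype.card_fin]
          rw [show (∑ k, z.1 k ^ 2) = s from by rw [hsdef]; rfl]
          rw [nsmul_eq_mul]
  -- the y-second derivatives
  have hyterm : ∀ h : Fin l,
      pdy (pdy (fun w => w.2 j / (1 / (1 + γ) ^ 2 * nsq w.1 ^ (1 + γ) + nsq w.2)) h) h z
        = (-2 * z.2 j * Q - 4 * (if j = h then z.2 h else 0) * Q
            + 8 * z.2 h ^ 2 * z.2 j) / Q ^ 3 := by
    intro h
    have hD : 0 < 1 / (1 + γ) ^ 2 * s ^ (1 + γ) + (B - z.2 h ^ 2) := by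
      have h2 := sq_le_nsq z.2 h
      rw [← hBdef] at h2
      have h3 : 0 < 1 / (1 + γ) ^ 2 * s ^ (1 + γ) := by positivity
      linarith
    have e1 : pdy (pdy (fun w => w.2 j / (1 / (1 + γ) ^ 2 * nsq w.1 ^ (1 + γ) + nsq w.2)) h) h z
        = deriv (deriv (fun t => ((if j = h then (1 : ℝ) else 0) * t
              + (if j = h then (0 : ℝ) else z.2 j)) /
            ((1 / (1 + γ) ^ 2 * s ^ (1 + γ) + (B - z.2 h ^ 2)) + t ^ 2))) (z.2 h) := by
      simp only [pdy]
      congr 1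
      funext t
      simp only [Function.update_idem, Function.update_self]
      congr 1
      funext r
      rw [nsq_update, ← hsdef, ← hBdef, Function.update_apply]
      by_cases hjh : j = h
      · rw [if_pos hjh, if_pos hjh, if_pos hjh]
        ring_nf
      · rw [if_neg hjh, if_neg hjh, if_neg hjh]
        ring_nf
    rw [e1, ysecond _ _ _ hD (z.2 h)]
    rw [show (1 / (1 + γ) ^ 2 * s ^ (1 + γ) + (B - z.2 h ^ 2)) + z.2 h ^ 2 = Q from by
      rw [hQdef]; ring]
    by_cases hjh : j = h
    · rw [if_pos hjh, if_pos hjh, if_pos hjh, hjh]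
      ring
    · rw [if_neg hjh, if_neg hjh, if_neg hjh]
      ring
  -- sum of the y-second derivatives
  have hYsum : (∑ h, pdy (pdy (fun w => w.2 j /
        (1 / (1 + γ) ^ 2 * nsq w.1 ^ (1 + γ) + nsq w.2)) h) h z)
      = ((-2 * (l : ℝ) * z.2 j - 4 * z.2 j) * Q + 8 * B * z.2 j) / Q ^ 3 := by
    calc (∑ h, pdy (pdy (fun w => w.2 j /
            (1 / (1 + γ) ^ 2 * nsq w.1 ^ (1 + γ) + nsq w.2)) h) h z)
        = ∑ h, ((-2 * z.2 j * Q) / Q ^ 3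
            + (-4 * Q / Q ^ 3) * (if j = h then z.2 h else 0)
            + (8 * z.2 j / Q ^ 3) * z.2 h ^ 2) :=
          Finset.sum_congr rfl fun h _ => by rw [hyterm h]; ring
      _ = _ := by
          rw [Finset.sum_add_distrib, Finset.sum_add_distrib, Finset.sum_const,
            ← Finset.mul_sum, ← Finset.mul_sum, Finset.card_univ, Fintype.card_fin]
          rw [show (∑ h, if j = h then z.2 h else 0) = z.2 j from by
            simp [Finset.sum_ite_eq]]
          rw [show (∑ h, z.2 h ^ 2) = B from by rw [hBdef]; rfl]
          rw [nsmul_eq_mul]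
          field_simp
          ring
  rw [hXsum, hYsum]
  -- the distance factor
  have hgd : gd γ z ^ (-4 - 4 * γ) = (Q ^ 2)⁻¹ := by
    have h0 : (0 : ℝ) ≤ 1 / (1 + γ) ^ 2 * s ^ (1 + γ) + B := by positivity
    simp only [gd, ← hsdef, ← hBdef]
    rw [← Real.rpow_mul h0]
    rw [show 1 / (2 + 2 * γ) * (-4 - 4 * γ) = (-2 : ℝ) from by
      rw [div_mul_eq_mul_div, div_eq_iff (by linarith : (2:ℝ) + 2*γ ≠ 0)]; ring]
    rw [← hQdef, Real.rpow_neg hQ.le,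
      show ((2 : ℝ)) = ((2 : ℕ) : ℝ) from by norm_num, Real.rpow_natCast]
  rw [hgd]
  -- the final scalar identity
  have hs1γ : s ^ (1 + γ) = s * s ^ γ := by
    rw [Real.rpow_add hs, Real.rpow_one]
  have hsγ1 : s ^ (γ - 1) = s ^ γ / s := by
    rw [Real.rpow_sub hs, Real.rpow_one]
  have hBQ : B = Q - 1 / (1 + γ) ^ 2 * (s * s ^ γ) := by
    rw [hQdef, hs1γ]; ring
  rw [hsγ1, hBQ]
  have h1' : (1 : ℝ) + γ ≠ 0 := h1.ne'
  field_simp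
  ring
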